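/- Given m candidates and committee size 0 < k < m, there exists a number of voters n and an approval profile on n voters whose core is empty if and only if the optimization problem max over rational vote distributions x ∈ Δ(2^C), min over k-committees W, max over nonempty deviations W' of size at most k, of (∑_{A : |A∩W'| > |A∩W|} x[A]) − |W'|/k, attains a nonnegative value. -/
import Mathlib

private lemma fiber_count {C : Type*} [Fintype C] [DecidableEq C] {n : ℕ}
    (P : Fin n → Finset C) (pred : Finset C → Prop) [DecidablePred pred] :
    ((Finset.univ.filter (fun i => pred (P i))).card) =
      ∑ A ∈ Finset.univ.filter pred, (Finset.univ.filter (fun i => P i = A)).card := by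
  rw [Finset.card_eq_sum_card_fiberwise (f := P) (t := Finset.univ.filter pred)
    (by intro i hi; simp at hi ⊢; exact hi)]
  apply Finset.sum_congr rfl
  intro A hA
  simp only [Finset.mem_filter, Finset.mem_univ, true_and] at hA
  congr 1
  ext i
  simp only [Finset.mem_filter, Finset.mem_univ, true_and]
  constructor
  · rintro ⟨-, h⟩; exact h
  · intro h; exact ⟨by rw [h]; exact hA, h⟩

theorem stmt2 {C : Type*} [Fintype C] [DecidableEq C] (m k : ℕ)
    (hm : Fintype.card C = m) (hk : 0 < k) (hkm : k < m) :
    (∃ n : ℕ, 0 < n ∧ ∃ P : Fin n → Finset C,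
        ∀ W : Finset C, W.card = k →
          ∃ W' : Finset C, W'.Nonempty ∧ W'.card ≤ k ∧
            (W'.card : ℚ) ≤ ((Finset.univ.filter
              (fun i => (P i ∩ W).card < (P i ∩ W').card)).card : ℚ) * k / n) ↔
    (∃ x : Finset C → ℚ, (∀ A, 0 ≤ x A) ∧ (∑ A : Finset C, x A = 1) ∧
        ∀ W : Finset C, W.card = k →
          ∃ W' : Finset C, W'.Nonempty ∧ W'.card ≤ k ∧
            0 ≤ (∑ A ∈ Finset.univ.filter
                  (fun A : Finset C => (A ∩ W).card < (A ∩ W').card), x A)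
                - (W'.card : ℚ) / k) := by
  have hkQ : (0 : ℚ) < k := by exact_mod_cast hk
  constructor
  · rintro ⟨n, hn, P, hP⟩
    have hnQ : (0 : ℚ) < n := by exact_mod_cast hn
    refine ⟨fun A => ((Finset.univ.filter (fun i => P i = A)).card : ℚ) / n, ?_, ?_, ?_⟩
    · intro A; positivity
    · rw [← Finset.sum_div]
      rw [div_eq_one_iff_eq (ne_of_gt hnQ)]
      have := fiber_count P (fun _ => True)
      simp only [Finset.filter_true] at this
      rw_mod_cast [← this]
      simp
    · intro W hW
      obtain ⟨W', hne, hle, hineq⟩ := hP W hW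
      refine ⟨W', hne, hle, ?_⟩
      rw [← Finset.sum_div, sub_nonneg, div_le_div_iff₀ hkQ hnQ]
      rw [le_div_iff₀ hnQ, fiber_count P (fun A => (A ∩ W).card < (A ∩ W').card)] at hineq
      push_cast at hineq
      linarith
  · rintro ⟨x, hx0, hx1, hx⟩
    set n : ℕ := ∏ A : Finset C, (x A).den with hn_def
    have hn : 0 < n := Finset.prod_pos (fun A _ => (x A).pos)
    have hnQ : (0 : ℚ) < n := by exact_mod_cast hn
    set c : Finset C → ℕ := fun A => (x A).num.toNat * (n / (x A).den) with hc_def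
    have hc : ∀ A, (c A : ℚ) = x A * n := by
      intro A
      have hd : (x A).den ∣ n := Finset.dvd_prod_of_mem _ (Finset.mem_univ A)
      have hden : ((x A).den : ℚ) ≠ 0 := by exact_mod_cast (x A).den_nz
      obtain ⟨t, ht⟩ := hd
      have h1 : n / (x A).den = t := by rw [ht]; exact Nat.mul_div_cancel_left t (x A).pos
      have h2 : x A * n = ((x A).num : ℚ) * t := by
        rw [ht]; push_cast
        rw [← mul_assoc, Rat.mul_den_eq_num]
      rw [hc_def]
      simp only [h1, h2]
      have h3 : ((x A).num.toNat : ℚ) = (x A).num := by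
        exact_mod_cast Int.toNat_of_nonneg (Rat.num_nonneg.mpr (hx0 A))
      push_cast
      rw [h3]
    have hsum : ∑ A : Finset C, c A = n := by
      have : ((∑ A : Finset C, c A : ℕ) : ℚ) = (n : ℚ) := by
        push_cast
        simp only [hc, ← Finset.sum_mul, hx1, one_mul]
      exact_mod_cast this
    have e : (Σ A : Finset C, Fin (c A)) ≃ Fin n :=
      Fintype.equivFinOfCardEq (by simp [hsum])
    refine ⟨n, hn, fun i => (e.symm i).1, ?_⟩
    intro W hW
    obtain ⟨W', hne, hle, hineq⟩ := hx W hW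
    refine ⟨W', hne, hle, ?_⟩
    set pred : Finset C → Prop := fun A => (A ∩ W).card < (A ∩ W').card with hpred
    have hcount : (Finset.univ.filter (fun i : Fin n => pred ((e.symm i).1))).card
        = ∑ A ∈ Finset.univ.filter pred, c A := by
      have h1 : (Finset.univ.filter (fun s : Σ A : Finset C, Fin (c A) => pred s.1)).card
          = (Finset.univ.filter (fun i : Fin n => pred ((e.symm i).1))).card := by
        apply Finset.card_equiv e
        intro s
        simp
      rw [← h1]
      have h2 : (Finset.univ.filter (fun s : Σ A : Finset C, Fin (c A) => pred s.1))
          = (Finset.univ.filter pred).sigma (fun A => Finset.univ) := by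
        ext ⟨A, j⟩
        simp [Finset.mem_sigma]
      rw [h2, Finset.card_sigma]
      simp
    rw [hcount]
    have hS : ((∑ A ∈ Finset.univ.filter pred, c A : ℕ) : ℚ)
        = (∑ A ∈ Finset.univ.filter pred, x A) * n := by
      push_cast
      rw [Finset.sum_mul]
      exact Finset.sum_congr rfl (fun A _ => hc A)
    rw [hS, le_div_iff₀ hnQ]
    rw [sub_nonneg, div_le_iff₀ hkQ] at hineq
    nlinarith [mul_le_mul_of_nonneg_right hineq hnQ.le]
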